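/- arXiv:0804.3575 — 6 statements merged into one kernel-verified Lean document; each statement's English description precedes it below -/
import Mathlib

section
/- For any two nonzero vectors a, b in Euclidean space, |aᵀb| / (‖a‖‖b‖) ≥ (1 − ‖a−b‖²/max{‖a‖², ‖b‖²})^{1/2}, provided ‖a−b‖² ≤ max{‖a‖², ‖b‖²}. -/
open scoped RealInnerProductSpace

/-- For any two nonzero vectors `a, b ∈ ℝⁿ`, with `‖a−b‖² ≤ max{‖a‖², ‖b‖²}`,
`|⟪a,b⟫| / (‖a‖‖b‖) ≥ √(1 − ‖a−b‖² / max{‖a‖², ‖b‖²})`. -/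
theorem stmt_1 {n : ℕ} (a b : EuclideanSpace ℝ (Fin n)) (ha : a ≠ 0) (hb : b ≠ 0)
    (h : ‖a - b‖ ^ 2 ≤ max (‖a‖ ^ 2) (‖b‖ ^ 2)) :
    Real.sqrt (1 - ‖a - b‖ ^ 2 / max (‖a‖ ^ 2) (‖b‖ ^ 2)) ≤ |⟪a, b⟫| / (‖a‖ * ‖b‖) := by
  have hA : (0:ℝ) < ‖a‖ := norm_pos_iff.mpr ha
  have hB : (0:ℝ) < ‖b‖ := norm_pos_iff.mpr hb
  have hD : ‖a - b‖ ^ 2 = ‖a‖ ^ 2 - 2 * ⟪a, b⟫ + ‖b‖ ^ 2 := norm_sub_sq_real a b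
  rw [Real.sqrt_le_iff]
  constructor
  · positivity
  · have : (|⟪a, b⟫| / (‖a‖ * ‖b‖)) ^ 2 = ⟪a, b⟫ ^ 2 / (‖a‖ ^ 2 * ‖b‖ ^ 2) := by
      rw [div_pow, sq_abs, mul_pow]
    rw [this]
    rcases le_total (‖b‖ ^ 2) (‖a‖ ^ 2) with hc | hc
    · rw [max_eq_left hc, hD, one_sub_div (by positivity), div_le_div_iff₀ (by positivity) (by positivity)]
      nlinarith [sq_nonneg (⟪a, b⟫ - ‖b‖ ^ 2), sq_nonneg ‖a‖, sq_nonneg ‖b‖, mul_pos hA hB]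
    · rw [max_eq_right hc, hD, one_sub_div (by positivity), div_le_div_iff₀ (by positivity) (by positivity)]
      nlinarith [sq_nonneg (⟪a, b⟫ - ‖a‖ ^ 2), sq_nonneg ‖a‖, sq_nonneg ‖b‖, mul_pos hA hB]
end

section
/- Let w₁, w₂ > 0 with w₁ + w₂ = 1, means μ₁, μ₂ ∈ ℝⁿ with w₁μ₁ + w₂μ₂ = 0, and symmetric positive semi-definite matrices Σ₁, Σ₂. Define J(p) = (pᵀ(w₁Σ₁ + w₂Σ₂)p) / (pᵀ(w₁(Σ₁+μ₁μ₁ᵀ) + w₂(Σ₂+μ₂μ₂ᵀ))p) for a unit vector p with nonzero denominator. If |pᵀ(μ₁−μ₂)| > t(√(pᵀw₁Σ₁p) + √(pᵀw₂Σ₂p)) for some t > 0, then J(p) ≤ 1/(1 + w₁w₂t²). -/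
open Matrix

lemma rank_one_quad {n : ℕ} (μ p : Fin n → ℝ) :
    p ⬝ᵥ (replicateCol (Fin 1) μ * replicateRow (Fin 1) μ) *ᵥ p = (p ⬝ᵥ μ) ^ 2 := by
  simp [mulVec, dotProduct, Matrix.mul_apply, Finset.mul_sum, Finset.sum_mul, sq]
  exact Finset.sum_congr rfl fun i _ => Finset.sum_congr rfl fun j _ => by ring

/-- Two-component mixture: weights `w₁,w₂ > 0` summing to 1, means with `w₁μ₁ + w₂μ₂ = 0`,
PSD covariances `S₁,S₂`.  If `|pᵀ(μ₁−μ₂)| > t(√(pᵀw₁S₁p) + √(pᵀw₂S₂p))` for a unit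
vector `p` (with nonzero total-variance denominator) and `t > 0`, then the Fisher
discriminant satisfies `J(p) ≤ 1/(1 + w₁w₂t²)`. -/
theorem stmt_4 {n : ℕ} (w₁ w₂ : ℝ) (hw₁ : 0 < w₁) (hw₂ : 0 < w₂) (hsum : w₁ + w₂ = 1)
    (μ₁ μ₂ : Fin n → ℝ) (hmean : w₁ • μ₁ + w₂ • μ₂ = 0)
    (S₁ S₂ : Matrix (Fin n) (Fin n) ℝ) (hS₁ : S₁.PosSemidef) (hS₂ : S₂.PosSemidef)
    (p : Fin n → ℝ) (hp : p ⬝ᵥ p = 1)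
    (hden : p ⬝ᵥ (w₁ • (S₁ + replicateCol (Fin 1) μ₁ * replicateRow (Fin 1) μ₁)
        + w₂ • (S₂ + replicateCol (Fin 1) μ₂ * replicateRow (Fin 1) μ₂)) *ᵥ p ≠ 0)
    (t : ℝ) (ht : 0 < t)
    (hsep : t * (Real.sqrt (p ⬝ᵥ (w₁ • S₁) *ᵥ p) + Real.sqrt (p ⬝ᵥ (w₂ • S₂) *ᵥ p))
        < |p ⬝ᵥ (μ₁ - μ₂)|) :
    (p ⬝ᵥ (w₁ • S₁ + w₂ • S₂) *ᵥ p) /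
        (p ⬝ᵥ (w₁ • (S₁ + replicateCol (Fin 1) μ₁ * replicateRow (Fin 1) μ₁)
          + w₂ • (S₂ + replicateCol (Fin 1) μ₂ * replicateRow (Fin 1) μ₂)) *ᵥ p)
      ≤ 1 / (1 + w₁ * w₂ * t ^ 2) := by
  set a := p ⬝ᵥ S₁ *ᵥ p with ha
  set b := p ⬝ᵥ S₂ *ᵥ p with hb
  set m₁ := p ⬝ᵥ μ₁ with hm₁
  set m₂ := p ⬝ᵥ μ₂ with hm₂
  have ha0 : 0 ≤ a := by simpa using hS₁.dotProduct_mulVec_nonneg p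
  have hb0 : 0 ≤ b := by simpa using hS₂.dotProduct_mulVec_nonneg p
  have hmean' : w₁ * m₁ + w₂ * m₂ = 0 := by
    have := congrArg (fun v => p ⬝ᵥ v) hmean
    simpa [dotProduct_add, dotProduct_smul, hm₁, hm₂, smul_eq_mul] using this
  have hnum : p ⬝ᵥ (w₁ • S₁ + w₂ • S₂) *ᵥ p = w₁ * a + w₂ * b := by
    simp [add_mulVec, smul_mulVec, dotProduct_add, dotProduct_smul, ha, hb,
      smul_eq_mul]
  have hD : p ⬝ᵥ (w₁ • (S₁ + replicateCol (Fin 1) μ₁ * replicateRow (Fin 1) μ₁)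
        + w₂ • (S₂ + replicateCol (Fin 1) μ₂ * replicateRow (Fin 1) μ₂)) *ᵥ p
      = w₁ * a + w₂ * b + (w₁ * m₁ ^ 2 + w₂ * m₂ ^ 2) := by
    simp only [add_mulVec, smul_mulVec, dotProduct_add, dotProduct_smul, smul_eq_mul]
    rw [rank_one_quad, rank_one_quad]
    ring
  have hcross : w₁ * m₁ ^ 2 + w₂ * m₂ ^ 2 = w₁ * w₂ * (m₁ - m₂) ^ 2 := by
    linear_combination (w₁ * m₁ + w₂ * m₂) * hmean' - (w₁ * m₁ ^ 2 + w₂ * m₂ ^ 2) * hsum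
  rw [hD, hcross] at hden
  rw [hnum, hD, hcross]
  set σ := w₁ * a + w₂ * b with hσ
  have hσ0 : 0 ≤ σ := by positivity
  set d := m₁ - m₂ with hd
  have hsep' : t * (Real.sqrt (w₁ * a) + Real.sqrt (w₂ * b)) < |d| := by
    have e1 : p ⬝ᵥ (w₁ • S₁) *ᵥ p = w₁ * a := by
      simp [smul_mulVec, dotProduct_smul, ha, smul_eq_mul]
    have e2 : p ⬝ᵥ (w₂ • S₂) *ᵥ p = w₂ * b := by
      simp [smul_mulVec, dotProduct_smul, hb, smul_eq_mul]
    have e3 : p ⬝ᵥ (μ₁ - μ₂) = d := by simp [dotProduct_sub, hd, hm₁, hm₂]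
    rwa [e1, e2, e3] at hsep
  clear_value a b m₁ m₂
  clear hmean hS₁ hS₂ hsep hnum hD ha hb hm₁ hm₂ hp hmean' S₁ S₂ μ₁ μ₂ p
  -- key: t^2 * σ ≤ d^2
  have hkey : t ^ 2 * σ ≤ d ^ 2 := by
    have h1 : 0 ≤ t * (Real.sqrt (w₁ * a) + Real.sqrt (w₂ * b)) := by positivity
    have h2 : (t * (Real.sqrt (w₁ * a) + Real.sqrt (w₂ * b))) ^ 2 ≤ d ^ 2 := by
      calc (t * (Real.sqrt (w₁ * a) + Real.sqrt (w₂ * b))) ^ 2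
          ≤ |d| ^ 2 := by
            apply pow_le_pow_left₀ h1 (le_of_lt hsep')
        _ = d ^ 2 := sq_abs d
    have hsq1 : Real.sqrt (w₁ * a) ^ 2 = w₁ * a := Real.sq_sqrt (by positivity)
    have hsq2 : Real.sqrt (w₂ * b) ^ 2 = w₂ * b := Real.sq_sqrt (by positivity)
    nlinarith [Real.sqrt_nonneg (w₁ * a), Real.sqrt_nonneg (w₂ * b),
      mul_nonneg (Real.sqrt_nonneg (w₁ * a)) (Real.sqrt_nonneg (w₂ * b)), sq_nonneg t]
  have hDpos : 0 < σ + w₁ * w₂ * d ^ 2 := by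
    have hne : σ + w₁ * w₂ * d ^ 2 ≠ 0 := hden
    have : 0 ≤ σ + w₁ * w₂ * d ^ 2 := by positivity
    exact lt_of_le_of_ne this (Ne.symm hne)
  have hKpos : (0:ℝ) < 1 + w₁ * w₂ * t ^ 2 := by positivity
  rw [div_le_div_iff₀ hDpos hKpos]
  have : w₁ * w₂ * (t ^ 2 * σ) ≤ w₁ * w₂ * d ^ 2 := by
    have := mul_le_mul_of_nonneg_left hkey (le_of_lt (mul_pos hw₁ hw₂))
    linarith
  nlinarith [hσ0]
end

section
/- Suppose {wᵢ, μᵢ, Σᵢ}_{i=1}^k defines an isotropic mixture in ℝⁿ (i.e., ∑ᵢ wᵢμᵢ = 0 and ∑ᵢ wᵢ(Σᵢ + μᵢμᵢᵀ) = I) with dim(span{μ₁,…,μ_k}) = k−1. Let Σ = ∑ᵢ wᵢΣᵢ with eigenvalues λ₁ ≥ ⋯ ≥ λₙ and corresponding eigenvectors v₁,…,vₙ. Then span{v_{n−k+2},…,vₙ} = span{μ₁,…,μ_k}, and this span is the unique (k−1)-dimensional subspace minimizing S ↦ ∑_{j=1}^{k−1} pⱼᵀΣpⱼ over orthonormal bases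 {pⱼ} of S. -/
open Matrix Finset

section Helpers
variable {n m : ℕ}

lemma sum_dot {ι : Type*} (s : Finset ι) (f : ι → Fin n → ℝ) (y : Fin n → ℝ) :
    (∑ i ∈ s, f i) ⬝ᵥ y = ∑ i ∈ s, f i ⬝ᵥ y := by
  simp only [dotProduct, Finset.sum_apply, Finset.sum_mul]
  exact Finset.sum_comm

lemma dot_sum {ι : Type*} (s : Finset ι) (f : ι → Fin n → ℝ) (y : Fin n → ℝ) :
    y ⬝ᵥ (∑ i ∈ s, f i) = ∑ i ∈ s, y ⬝ᵥ f i := by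
  rw [dotProduct_comm, sum_dot]
  exact Finset.sum_congr rfl fun i _ => dotProduct_comm _ _

lemma sum_matrix_mulVec {ι : Type*} (s : Finset ι) (A : ι → Matrix (Fin n) (Fin n) ℝ)
    (x : Fin n → ℝ) : (∑ i ∈ s, A i) *ᵥ x = ∑ i ∈ s, A i *ᵥ x := by
  ext j
  simp only [mulVec, dotProduct, Finset.sum_apply, Finset.sum_mul, Matrix.sum_apply]
  exact Finset.sum_comm

lemma vecMulVec_mulVec' (a b x : Fin n → ℝ) : vecMulVec a b *ᵥ x = (b ⬝ᵥ x) • a := by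
  ext j
  simp [mulVec, vecMulVec_apply, dotProduct, Finset.mul_sum, mul_comm, mul_assoc, Pi.smul_apply, smul_eq_mul]
  congr 1
  ext i
  ring

lemma dot_self_nonneg' (x : Fin n → ℝ) : 0 ≤ x ⬝ᵥ x :=
  Finset.sum_nonneg fun i _ => mul_self_nonneg _

lemma ortho_li (p : Fin m → Fin n → ℝ)
    (hp : ∀ i j, p i ⬝ᵥ p j = if i = j then (1 : ℝ) else 0) :
    LinearIndependent ℝ p := by
  rw [Fintype.linearIndependent_iff]
  intro g hg j
  have : (∑ i, g i • p i) ⬝ᵥ p j = g j := by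
    rw [sum_dot]
    simp only [smul_dotProduct, smul_eq_mul, hp]
    simp
  rw [hg] at this
  simpa using this.symm

lemma residual_dot (p : Fin m → Fin n → ℝ)
    (hp : ∀ i j, p i ⬝ᵥ p j = if i = j then (1 : ℝ) else 0) (x : Fin n → ℝ) (j : Fin m) :
    (x - ∑ i, (x ⬝ᵥ p i) • p i) ⬝ᵥ p j = 0 := by
  rw [sub_dotProduct, sum_dot]
  simp only [smul_dotProduct, smul_eq_mul, hp]
  simp [dotProduct_comm x (p j)]

lemma residual_norm (p : Fin m → Fin n → ℝ)
    (hp : ∀ i j, p i ⬝ᵥ p j = if i = j then (1 : ℝ) else 0) (x : Fin n → ℝ) :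
    (x - ∑ i, (x ⬝ᵥ p i) • p i) ⬝ᵥ (x - ∑ i, (x ⬝ᵥ p i) • p i)
      = x ⬝ᵥ x - ∑ i, (x ⬝ᵥ p i) ^ 2 := by
  set r := x - ∑ i, (x ⬝ᵥ p i) • p i with hr
  have h1 : r ⬝ᵥ r = r ⬝ᵥ x - ∑ i, (x ⬝ᵥ p i) * (r ⬝ᵥ p i) := by
    conv_lhs => rw [hr]
    rw [dotProduct_sub, dot_sum]
    simp only [dotProduct_smul, smul_eq_mul]
    rfl
  have h2 : ∀ i, r ⬝ᵥ p i = 0 := residual_dot p hp x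
  have h3 : r ⬝ᵥ x = x ⬝ᵥ x - ∑ i, (x ⬝ᵥ p i) ^ 2 := by
    rw [hr, sub_dotProduct, sum_dot]
    simp only [smul_dotProduct, smul_eq_mul]
    congr 1
    exact Finset.sum_congr rfl fun i _ => by rw [dotProduct_comm (p i) x]; ring
  simp [h1, h2, h3]

lemma bessel_le (p : Fin m → Fin n → ℝ)
    (hp : ∀ i j, p i ⬝ᵥ p j = if i = j then (1 : ℝ) else 0) (x : Fin n → ℝ) :
    ∑ i, (x ⬝ᵥ p i) ^ 2 ≤ x ⬝ᵥ x := by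
  have := residual_norm p hp x
  have h := dot_self_nonneg' (x - ∑ i, (x ⬝ᵥ p i) • p i)
  linarith [this ▸ h]

lemma bessel_eq_mem (p : Fin m → Fin n → ℝ)
    (hp : ∀ i j, p i ⬝ᵥ p j = if i = j then (1 : ℝ) else 0) (x : Fin n → ℝ)
    (h : ∑ i, (x ⬝ᵥ p i) ^ 2 = x ⬝ᵥ x) :
    x ∈ Submodule.span ℝ (Set.range p) := by
  have hres := residual_norm p hp x
  rw [h, sub_self] at hres
  have : x - ∑ i, (x ⬝ᵥ p i) • p i = 0 := dotProduct_self_eq_zero.mp hres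
  have hx : x = ∑ i, (x ⬝ᵥ p i) • p i := sub_eq_zero.mp this
  rw [hx]
  exact Submodule.sum_mem _ fun i _ =>
    Submodule.smul_mem _ _ (Submodule.subset_span ⟨i, rfl⟩)

lemma dot_zero_of_mem_span {s : Set (Fin n → ℝ)} {r : Fin n → ℝ}
    (h : ∀ y ∈ s, y ⬝ᵥ r = 0) {x : Fin n → ℝ} (hx : x ∈ Submodule.span ℝ s) :
    x ⬝ᵥ r = 0 := by
  induction hx using Submodule.span_induction with
  | mem y hy => exact h y hy
  | zero => simp
  | add a b _ _ ha hb => rw [add_dotProduct, ha, hb, add_zero]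
  | smul c a _ ha => rw [smul_dotProduct, ha, smul_zero]

lemma parseval (v : Fin n → Fin n → ℝ)
    (hv : ∀ i j, v i ⬝ᵥ v j = if i = j then (1 : ℝ) else 0) (x : Fin n → ℝ) :
    ∑ i, (x ⬝ᵥ v i) ^ 2 = x ⬝ᵥ x := by
  have hli := ortho_li v hv
  have htop : Submodule.span ℝ (Set.range v) = ⊤ :=
    hli.span_eq_top_of_card_eq_finrank' (by simp)
  set r := x - ∑ i, (x ⬝ᵥ v i) • v i with hr
  have h2 : ∀ j, r ⬝ᵥ v j = 0 := residual_dot v hv x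
  have hmem : r ∈ Submodule.span ℝ (Set.range v) := htop ▸ Submodule.mem_top
  have hz : r ⬝ᵥ r = 0 := by
    refine dot_zero_of_mem_span ?_ hmem
    rintro y ⟨j, rfl⟩
    rw [dotProduct_comm]; exact h2 j
  have := residual_norm v hv x
  rw [← hr] at this
  linarith [this ▸ hz]

end Helpers

/-- For an isotropic mixture `{wᵢ, μᵢ, Σᵢ}` in `ℝⁿ` with `dim span{μᵢ} = k−1`, letting
`Σ = ∑ᵢ wᵢΣᵢ` have eigenvalues `λ₁ ≥ ⋯ ≥ λₙ` with orthonormal eigenvectors `v₁,…,vₙ`,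
the span of the last `k−1` eigenvectors equals `span{μ₁,…,μ_k}`, and this subspace is the
unique `(k−1)`-dimensional subspace minimizing `∑ⱼ pⱼᵀΣpⱼ` over orthonormal bases. -/
theorem stmt_7 {n k : ℕ} (hk : 1 ≤ k) (hkn : k ≤ n)
    (w : Fin k → ℝ) (hw : ∀ i, 0 < w i) (hwsum : ∑ i, w i = 1)
    (μ : Fin k → (Fin n → ℝ)) (S : Fin k → Matrix (Fin n) (Fin n) ℝ)
    (hS : ∀ i, (S i).PosDef)
    (hmean : ∑ i, w i • μ i = 0)
    (hiso : ∑ i, w i • (S i + vecMulVec (μ i) (μ i)) = 1)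
    (hdim : Module.finrank ℝ (Submodule.span ℝ (Set.range μ)) = k - 1)
    (lam : Fin n → ℝ) (hanti : Antitone lam)
    (v : Fin n → (Fin n → ℝ))
    (hortho : ∀ i j, v i ⬝ᵥ v j = if i = j then (1 : ℝ) else 0)
    (heig : ∀ i, (∑ j, w j • S j) *ᵥ v i = lam i • v i) :
    Submodule.span ℝ {x | ∃ i : Fin n, n - (k - 1) ≤ (i : ℕ) ∧ x = v i}
        = Submodule.span ℝ (Set.range μ) ∧
    ∀ p : Fin (k - 1) → (Fin n → ℝ),
      (∀ i j, p i ⬝ᵥ p j = if i = j then (1 : ℝ) else 0) →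
      ((∑ i ∈ Finset.univ.filter (fun i : Fin n => n - (k - 1) ≤ (i : ℕ)), lam i)
          ≤ ∑ j, p j ⬝ᵥ (∑ i, w i • S i) *ᵥ p j ∧
        ((∑ j, p j ⬝ᵥ (∑ i, w i • S i) *ᵥ p j
            = ∑ i ∈ Finset.univ.filter (fun i : Fin n => n - (k - 1) ≤ (i : ℕ)), lam i) →
          Submodule.span ℝ (Set.range p) = Submodule.span ℝ (Set.range μ))) := by
  classical
  set Sig : Matrix (Fin n) (Fin n) ℝ := ∑ j, w j • S j with hSig
  set M : Matrix (Fin n) (Fin n) ℝ := ∑ i, w i • vecMulVec (μ i) (μ i) with hM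
  set T := Submodule.span ℝ (Set.range μ) with hT
  have hSM : Sig + M = 1 := by
    rw [hSig, hM, ← Finset.sum_add_distrib]
    rw [← hiso]
    exact Finset.sum_congr rfl fun i _ => (smul_add _ _ _).symm
  have hMx : ∀ x, M *ᵥ x = ∑ i, (w i * (μ i ⬝ᵥ x)) • μ i := by
    intro x
    rw [hM, sum_matrix_mulVec]
    refine Finset.sum_congr rfl fun i _ => ?_
    rw [smul_mulVec, vecMulVec_mulVec', smul_smul]
  have hMmem : ∀ x, M *ᵥ x ∈ T := fun x => by
    rw [hMx]
    exact Submodule.sum_mem _ fun i _ =>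
      Submodule.smul_mem _ _ (Submodule.subset_span ⟨i, rfl⟩)
  have hdotM : ∀ x, x ⬝ᵥ M *ᵥ x = ∑ i, w i * (μ i ⬝ᵥ x) ^ 2 := by
    intro x
    rw [hMx, dot_sum]
    refine Finset.sum_congr rfl fun i _ => ?_
    rw [dotProduct_smul, smul_eq_mul, dotProduct_comm]
    ring
  have hSigx : ∀ x, Sig *ᵥ x = x - M *ᵥ x := by
    intro x
    have h := congrArg (fun A : Matrix (Fin n) (Fin n) ℝ => A *ᵥ x) hSM
    simp only [add_mulVec, one_mulVec] at h
    exact eq_sub_of_add_eq h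
  have hMv : ∀ i, M *ᵥ v i = (1 - lam i) • v i := by
    intro i
    have h := heig i
    rw [hSigx] at h
    have : M *ᵥ v i = v i - lam i • v i := by
      rw [eq_sub_iff_add_eq, ← h]
      abel
    rw [this, sub_smul, one_smul]
  have hvMv : ∀ i, v i ⬝ᵥ M *ᵥ v i = 1 - lam i := by
    intro i
    rw [hMv, dotProduct_smul, hortho i i]
    simp
  have hquad : ∀ x, 0 ≤ x ⬝ᵥ M *ᵥ x := by
    intro x
    rw [hdotM]
    exact Finset.sum_nonneg fun i _ => mul_nonneg (hw i).le (sq_nonneg _)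
  have hlam_le : ∀ i, lam i ≤ 1 := by
    intro i
    have := hquad (v i)
    rw [hvMv] at this
    linarith
  have hperp : ∀ i : Fin n, ¬ lam i < 1 → ∀ j, μ j ⬝ᵥ v i = 0 := by
    intro i hi j
    have h1 : lam i = 1 := le_antisymm (hlam_le i) (not_lt.mp hi)
    have h0 : ∑ t, w t * (μ t ⬝ᵥ v i) ^ 2 = 0 := by
      rw [← hdotM, hvMv, h1, sub_self]
    have h2 := (Finset.sum_eq_zero_iff_of_nonneg
      (fun t _ => mul_nonneg (hw t).le (sq_nonneg _))).mp h0 j (Finset.mem_univ j)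
    have h3 : (μ j ⬝ᵥ v i) ^ 2 = 0 := by
      rcases mul_eq_zero.mp h2 with h | h
      · exact absurd h (hw j).ne'
      · exact h
    exact pow_eq_zero_iff (by norm_num) |>.mp h3
  have hvmem : ∀ i, lam i < 1 → v i ∈ T := by
    intro i hi
    have hne : (1 - lam i) ≠ 0 := by linarith
    have hv : v i = (1 - lam i)⁻¹ • (M *ᵥ v i) := by
      rw [hMv, smul_smul, inv_mul_cancel₀ hne, one_smul]
    rw [hv]
    exact Submodule.smul_mem _ _ (hMmem _)
  set B : Finset (Fin n) := Finset.univ.filter (fun i => lam i < 1) with hB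
  have hmuexp : ∀ j, μ j = ∑ i ∈ B, (μ j ⬝ᵥ v i) • v i := by
    intro j
    have h := residual_norm v hortho (μ j)
    rw [parseval v hortho, sub_self] at h
    have hres : μ j = ∑ i, (μ j ⬝ᵥ v i) • v i :=
      sub_eq_zero.mp (dotProduct_self_eq_zero.mp h)
    refine hres.trans (Finset.sum_subset (Finset.subset_univ B) ?_).symm
    intro i _ hiB
    have : ¬ lam i < 1 := by simpa [hB] using hiB
    rw [hperp i this j, zero_smul]
  have hspanB : Submodule.span ℝ (v '' ↑B) = T := by
    apply le_antisymm
    · rw [Submodule.span_le]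
      rintro x ⟨i, hi, rfl⟩
      exact hvmem i (by simpa [hB] using hi)
    · rw [hT, Submodule.span_le]
      rintro x ⟨j, rfl⟩
      rw [hmuexp j]
      exact Submodule.sum_mem _ fun i hi =>
        Submodule.smul_mem _ _ (Submodule.subset_span ⟨i, hi, rfl⟩)
  have hcardB : B.card = k - 1 := by
    have hli : LinearIndependent ℝ v := ortho_li v hortho
    have h1 : Module.finrank ℝ (Submodule.span ℝ (v '' ↑B)) = B.card := by
      rw [Set.image_eq_range]
      have h2 := finrank_span_eq_card
        (hli.comp (Subtype.val : {x : Fin n // x ∈ (↑B : Set (Fin n))} → Fin n)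
          Subtype.val_injective)
      simp only [Function.comp_def] at h2
      rw [h2]
      simp
    rw [hspanB, hT, hdim] at h1
    omega
  have hBeq : ∀ i : Fin n, i ∈ B ↔ n - (k - 1) ≤ (i : ℕ) := by
    intro i
    constructor
    · intro hi
      have hiB : lam i < 1 := by simpa [hB] using hi
      have hsub : Finset.Ici i ⊆ B := by
        intro j hj
        simp only [hB, Finset.mem_filter, Finset.mem_univ, true_and]
        exact lt_of_le_of_lt (hanti (Finset.mem_Ici.mp hj)) hiB
      have hc := Finset.card_le_card hsub
      rw [Fin.card_Ici, hcardB] at hc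
      have := i.isLt
      omega
    · intro hi
      by_contra hiB
      have hni : ¬ lam i < 1 := by simpa [hB] using hiB
      have hsub : Finset.Iic i ⊆ Bᶜ := by
        intro j hj
        rw [Finset.mem_compl]
        simp only [hB, Finset.mem_filter, Finset.mem_univ, true_and, not_lt]
        calc (1:ℝ) ≤ lam i := not_lt.mp hni
        _ ≤ lam j := hanti (Finset.mem_Iic.mp hj)
      have hc := Finset.card_le_card hsub
      rw [Fin.card_Iic, Finset.card_compl, hcardB, Fintype.card_fin] at hc
      have := i.isLt
      omega
  have hBF : B = Finset.univ.filter (fun i : Fin n => n - (k - 1) ≤ (i : ℕ)) := by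
    ext i
    simp only [Finset.mem_filter, Finset.mem_univ, true_and]
    exact hBeq i
  have hsetEq : {x | ∃ i : Fin n, n - (k - 1) ≤ (i : ℕ) ∧ x = v i} = v '' ↑B := by
    ext x
    simp only [Set.mem_setOf_eq, Set.mem_image, Finset.mem_coe]
    constructor
    · rintro ⟨i, hi, rfl⟩; exact ⟨i, (hBeq i).mpr hi, rfl⟩
    · rintro ⟨i, hi, rfl⟩; exact ⟨i, (hBeq i).mp hi, rfl⟩
  have htarget : ∑ i ∈ Finset.univ.filter (fun i : Fin n => n - (k - 1) ≤ (i : ℕ)), lam i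
      = ((k - 1 : ℕ) : ℝ) - ∑ t, w t * (μ t ⬝ᵥ μ t) := by
    rw [← hBF]
    have h1 : ∀ i ∈ B, lam i = 1 - v i ⬝ᵥ M *ᵥ v i := fun i _ => by rw [hvMv]; ring
    calc ∑ i ∈ B, lam i = ∑ i ∈ B, (1 - v i ⬝ᵥ M *ᵥ v i) := Finset.sum_congr rfl h1
    _ = (B.card : ℝ) - ∑ i ∈ B, v i ⬝ᵥ M *ᵥ v i := by
        rw [Finset.sum_sub_distrib]; simp
    _ = ((k - 1 : ℕ) : ℝ) - ∑ i, v i ⬝ᵥ M *ᵥ v i := by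
        rw [hcardB]
        congr 1
        apply Finset.sum_subset (Finset.subset_univ B)
        intro i _ hiB
        have hni : ¬ lam i < 1 := by simpa [hB] using hiB
        have : lam i = 1 := le_antisymm (hlam_le i) (not_lt.mp hni)
        rw [hvMv, this, sub_self]
    _ = ((k - 1 : ℕ) : ℝ) - ∑ t, w t * (μ t ⬝ᵥ μ t) := by
        congr 1
        rw [Finset.sum_congr rfl (fun i (_ : i ∈ Finset.univ) => hdotM (v i)),
          Finset.sum_comm]
        refine Finset.sum_congr rfl fun t _ => ?_
        rw [← Finset.mul_sum, parseval v hortho (μ t)]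
  refine ⟨by rw [hsetEq, hspanB], ?_⟩
  intro p hp
  have hpS : ∑ j, p j ⬝ᵥ Sig *ᵥ p j
      = ((k - 1 : ℕ) : ℝ) - ∑ t, w t * ∑ j, (μ t ⬝ᵥ p j) ^ 2 := by
    have h1 : ∀ j, p j ⬝ᵥ Sig *ᵥ p j = 1 - ∑ t, w t * (μ t ⬝ᵥ p j) ^ 2 := by
      intro j
      rw [hSigx, dotProduct_sub, hdotM]
      have := hp j j
      rw [if_pos rfl] at this
      rw [this]
    calc ∑ j, p j ⬝ᵥ Sig *ᵥ p j = ∑ j : Fin (k-1), (1 - ∑ t, w t * (μ t ⬝ᵥ p j) ^ 2) :=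
          Finset.sum_congr rfl fun j _ => h1 j
    _ = ((k - 1 : ℕ) : ℝ) - ∑ j : Fin (k-1), ∑ t, w t * (μ t ⬝ᵥ p j) ^ 2 := by
        rw [Finset.sum_sub_distrib]; simp
    _ = ((k - 1 : ℕ) : ℝ) - ∑ t, w t * ∑ j, (μ t ⬝ᵥ p j) ^ 2 := by
        congr 1
        rw [Finset.sum_comm]
        exact Finset.sum_congr rfl fun t _ => (Finset.mul_sum _ _ _).symm
  have hIneq : ∑ t, w t * ∑ j, (μ t ⬝ᵥ p j) ^ 2 ≤ ∑ t, w t * (μ t ⬝ᵥ μ t) :=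
    Finset.sum_le_sum fun t _ =>
      mul_le_mul_of_nonneg_left (bessel_le p hp (μ t)) (hw t).le
  have hgoal1 : (∑ i ∈ Finset.univ.filter (fun i : Fin n => n - (k - 1) ≤ (i : ℕ)), lam i)
      ≤ ∑ j, p j ⬝ᵥ Sig *ᵥ p j := by
    rw [hpS, htarget]; linarith
  refine ⟨hgoal1, ?_⟩
  intro heq
  rw [hpS, htarget] at heq
  have hsum_eq : ∑ t, w t * ∑ j, (μ t ⬝ᵥ p j) ^ 2 = ∑ t, w t * (μ t ⬝ᵥ μ t) := by linarith
  have hterm : ∀ t, ∑ j, (μ t ⬝ᵥ p j) ^ 2 = μ t ⬝ᵥ μ t := by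
    intro t
    by_contra hne
    have hlt : ∑ j, (μ t ⬝ᵥ p j) ^ 2 < μ t ⬝ᵥ μ t :=
      lt_of_le_of_ne (bessel_le p hp (μ t)) hne
    have hstrict : ∑ t, w t * ∑ j, (μ t ⬝ᵥ p j) ^ 2 < ∑ t, w t * (μ t ⬝ᵥ μ t) :=
      Finset.sum_lt_sum
        (fun s _ => mul_le_mul_of_nonneg_left (bessel_le p hp (μ s)) (hw s).le)
        ⟨t, Finset.mem_univ t, by
          exact mul_lt_mul_of_pos_left hlt (hw t)⟩
    linarith
  have hle : T ≤ Submodule.span ℝ (Set.range p) := by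
    rw [hT, Submodule.span_le]
    rintro x ⟨t, rfl⟩
    exact bessel_eq_mem p hp (μ t) (hterm t)
  have hfr : Module.finrank ℝ (Submodule.span ℝ (Set.range p)) = k - 1 := by
    rw [finrank_span_eq_card (ortho_li p hp)]
    simp
  exact (Submodule.eq_of_le_of_finrank_le hle (by rw [hfr, hT, hdim])).symm
end

section
/- For an isotropic mixture with weights wᵢ, means μᵢ, covariances Σᵢ, suppose span{e₁,…,e_{k−1}} equals the intermean subspace span{μ₁,…,μ_k} and write wᵢΣᵢ in block form [[Aᵢ, Bᵢᵀ],[Bᵢ, Dᵢ]] with Aᵢ of size (k−1)×(k−1). If the overlap φ = max over unit vectors v in the intermean subspace of vᵀ(∑ᵢ wᵢΣᵢ)v, then for each i: ‖Aᵢ‖ ≤ φ, ‖Dᵢ‖ ≤ 1, and ‖Bᵢ‖ ≤ √φ. -/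
open Matrix
open scoped Matrix.Norms.L2Operator

private lemma posSemidef_eq_ct_mul_self {n : Type*} [Fintype n] [DecidableEq n]
    {M : Matrix n n ℝ} (hM : M.PosSemidef) : ∃ T : Matrix n n ℝ, M = Tᴴ * T := by
  open MatrixOrder in
  obtain ⟨X, hX, -, rfl⟩ :=
    CFC.exists_sqrt_of_isSelfAdjoint_of_quasispectrumRestricts hM.isHermitian
      (QuasispectrumRestricts.nnreal_of_nonneg hM.nonneg)
  exact ⟨X, by rw [← Matrix.star_eq_conjTranspose, hX.star_eq]⟩

private lemma euclid_norm_eq {n : Type*} [Fintype n] (z : n → ℝ) :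
    ‖(WithLp.equiv 2 (n → ℝ)).symm z‖ = Real.sqrt (z ⬝ᵥ z) := by
  rw [EuclideanSpace.norm_eq]
  congr 1
  refine Finset.sum_congr rfl fun i _ => ?_
  simp [dotProduct, Real.norm_eq_abs, sq_abs, sq]

private lemma quad_factor {n : Type*} [Fintype n] (T : Matrix n n ℝ) (y : n → ℝ) :
    y ⬝ᵥ (Tᴴ * T) *ᵥ y = (T *ᵥ y) ⬝ᵥ (T *ᵥ y) := by
  rw [← Matrix.mulVec_mulVec, Matrix.dotProduct_mulVec, Matrix.vecMul_conjTranspose]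
  simp

private lemma norm_le_of_quad {n : Type*} [Fintype n] [DecidableEq n]
    {M : Matrix n n ℝ} (hM : M.PosSemidef) {c : ℝ} (hc : 0 ≤ c)
    (h : ∀ x : n → ℝ, x ⬝ᵥ M *ᵥ x ≤ c * (x ⬝ᵥ x)) : ‖M‖ ≤ c := by
  obtain ⟨T, rfl⟩ := posSemidef_eq_ct_mul_self hM
  rw [Matrix.l2_opNorm_conjTranspose_mul_self]
  have hT : ‖T‖ ≤ Real.sqrt c := by
    rw [Matrix.l2_opNorm_def]
    refine ContinuousLinearMap.opNorm_le_bound _ (Real.sqrt_nonneg c) fun x => ?_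
    set y : n → ℝ := WithLp.equiv 2 (n → ℝ) x with hy
    have hx : x = (WithLp.equiv 2 (n → ℝ)).symm y := rfl
    have happ : (Matrix.toEuclideanLin.trans LinearMap.toContinuousLinearMap T) x
        = (WithLp.equiv 2 (n → ℝ)).symm (T *ᵥ y) := by
      simp [Matrix.toEuclideanLin_apply, hy]
    rw [happ, euclid_norm_eq, hx, euclid_norm_eq]
    have h1 : (T *ᵥ y) ⬝ᵥ (T *ᵥ y) ≤ c * (y ⬝ᵥ y) := by
      rw [← quad_factor]; exact h y
    calc Real.sqrt ((T *ᵥ y) ⬝ᵥ (T *ᵥ y)) ≤ Real.sqrt (c * (y ⬝ᵥ y)) :=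
          Real.sqrt_le_sqrt h1
      _ = Real.sqrt c * Real.sqrt (y ⬝ᵥ y) := Real.sqrt_mul hc _
  calc ‖T‖ * ‖T‖ ≤ Real.sqrt c * Real.sqrt c :=
        mul_le_mul hT hT (norm_nonneg _) (Real.sqrt_nonneg c)
    _ = c := Real.mul_self_sqrt hc

private lemma norm_toBlocks₂₁_sq {p q : Type*} [Fintype p] [Fintype q]
    [DecidableEq p] [DecidableEq q]
    {M : Matrix (p ⊕ q) (p ⊕ q) ℝ} (hM : M.PosSemidef) :
    ‖M.toBlocks₂₁‖ * ‖M.toBlocks₂₁‖ ≤ ‖M.toBlocks₁₁‖ * ‖M.toBlocks₂₂‖ := by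
  obtain ⟨T, rfl⟩ := posSemidef_eq_ct_mul_self hM
  set T₁ := T.submatrix id Sum.inl with hT₁
  set T₂ := T.submatrix id Sum.inr with hT₂
  have h21 : (Tᴴ * T).toBlocks₂₁ = T₂ᴴ * T₁ := by
    ext a b
    simp [Matrix.toBlocks₂₁, Matrix.mul_apply, hT₁, hT₂]
  have h11 : (Tᴴ * T).toBlocks₁₁ = T₁ᴴ * T₁ := by
    ext a b
    simp [Matrix.toBlocks₁₁, Matrix.mul_apply, hT₁]
  have h22 : (Tᴴ * T).toBlocks₂₂ = T₂ᴴ * T₂ := by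
    ext a b
    simp [Matrix.toBlocks₂₂, Matrix.mul_apply, hT₂]
  rw [h21, h11, h22, Matrix.l2_opNorm_conjTranspose_mul_self,
    Matrix.l2_opNorm_conjTranspose_mul_self]
  have hmul : ‖T₂ᴴ * T₁‖ ≤ ‖T₂‖ * ‖T₁‖ := by
    have := Matrix.l2_opNorm_mul T₂ᴴ T₁
    rwa [Matrix.l2_opNorm_conjTranspose] at this
  calc ‖T₂ᴴ * T₁‖ * ‖T₂ᴴ * T₁‖ ≤ (‖T₂‖ * ‖T₁‖) * (‖T₂‖ * ‖T₁‖) :=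
        mul_le_mul hmul hmul (norm_nonneg _) (by positivity)
    _ = ‖T₁‖ * ‖T₁‖ * (‖T₂‖ * ‖T₂‖) := by ring

private lemma quad_blocks₁₁ {p q : Type*} [Fintype p] [Fintype q]
    (M : Matrix (p ⊕ q) (p ⊕ q) ℝ) (u : p → ℝ) :
    u ⬝ᵥ M.toBlocks₁₁ *ᵥ u = (Sum.elim u 0) ⬝ᵥ M *ᵥ (Sum.elim u 0) := by
  simp [Matrix.toBlocks₁₁, dotProduct, Matrix.mulVec, Fintype.sum_sum_type]

private lemma quad_blocks₂₂ {p q : Type*} [Fintype p] [Fintype q]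
    (M : Matrix (p ⊕ q) (p ⊕ q) ℝ) (v : q → ℝ) :
    v ⬝ᵥ M.toBlocks₂₂ *ᵥ v = (Sum.elim 0 v) ⬝ᵥ M *ᵥ (Sum.elim 0 v) := by
  simp [Matrix.toBlocks₂₂, dotProduct, Matrix.mulVec, Fintype.sum_sum_type]
private lemma quad_sum {n ι : Type*} [Fintype n] [Fintype ι] (M : ι → Matrix n n ℝ) (x : n → ℝ) :
    x ⬝ᵥ (∑ j, M j) *ᵥ x = ∑ j, x ⬝ᵥ (M j) *ᵥ x := by
  simp only [dotProduct, Matrix.mulVec, Matrix.sum_apply, Finset.sum_mul, Finset.mul_sum]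
  exact (Finset.sum_congr rfl fun a _ =>
      Finset.sum_comm (f := fun b (j : ι) => x a * (M j a b * x b))).trans
    (Finset.sum_comm (f := fun a (j : ι) => ∑ b, x a * (M j a b * x b)))

/-- Covariance structure: for an isotropic mixture whose means span exactly the first
`k−1` coordinate directions, writing `wᵢΣᵢ` in block form `[[Aᵢ, Bᵢᵀ],[Bᵢ, Dᵢ]]` (with
`Aᵢ` of size `(k−1)×(k−1)`), if `φ` is the overlap, i.e. the maximum of
`vᵀ(∑ᵢ wᵢΣᵢ)v` over unit vectors `v` in the intermean subspace, then for each `i`: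
`‖Aᵢ‖ ≤ φ`, `‖Dᵢ‖ ≤ 1`, and `‖Bᵢ‖ ≤ √φ` (spectral norms). -/
theorem stmt_8 {k m : ℕ} (hk : 2 ≤ k)
    (w : Fin k → ℝ) (hw : ∀ i, 0 < w i) (hwsum : ∑ i, w i = 1)
    (μ : Fin k → ((Fin (k - 1) ⊕ Fin m) → ℝ))
    (S : Fin k → Matrix (Fin (k - 1) ⊕ Fin m) (Fin (k - 1) ⊕ Fin m) ℝ)
    (hS : ∀ i, (S i).PosDef)
    (hmean : ∑ i, w i • μ i = 0)
    (hiso : ∑ i, w i • (S i + vecMulVec (μ i) (μ i)) = 1)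
    (hblock : ∀ i j, μ i (Sum.inr j) = 0)
    (hdim : Module.finrank ℝ (Submodule.span ℝ (Set.range μ)) = k - 1)
    (φ : ℝ)
    (hφ : IsGreatest {r : ℝ | ∃ u : Fin (k - 1) → ℝ, u ⬝ᵥ u = 1 ∧
        r = u ⬝ᵥ (∑ i, (w i • S i).toBlocks₁₁) *ᵥ u} φ) :
    ∀ i, ‖(w i • S i).toBlocks₁₁‖ ≤ φ ∧ ‖(w i • S i).toBlocks₂₂‖ ≤ 1 ∧
      ‖(w i • S i).toBlocks₂₁‖ ≤ Real.sqrt φ := by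
  classical
  set N : Matrix (Fin (k-1) ⊕ Fin m) (Fin (k-1) ⊕ Fin m) ℝ := ∑ j, w j • S j with hN
  -- each summand is PSD
  have hPSD : ∀ j, (w j • S j).PosSemidef := by
    intro j
    refine Matrix.PosSemidef.of_dotProduct_mulVec_nonneg ?_ fun x => ?_
    · unfold Matrix.IsHermitian
      rw [Matrix.conjTranspose_smul, (hS j).1]
      simp
    · have h0 := (hS j).posSemidef.dotProduct_mulVec_nonneg x
      rw [Matrix.smul_mulVec, dotProduct_smul]
      exact smul_nonneg (hw j).le h0
  have hquadnn : ∀ j (x : Fin (k-1) ⊕ Fin m → ℝ), 0 ≤ x ⬝ᵥ (w j • S j) *ᵥ x := by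
    intro j x
    have := (hPSD j).dotProduct_mulVec_nonneg x
    simpa using this
  have hsumquad : ∀ x : Fin (k-1) ⊕ Fin m → ℝ,
      x ⬝ᵥ N *ᵥ x = ∑ j, x ⬝ᵥ (w j • S j) *ᵥ x := by
    intro x
    rw [hN]
    exact quad_sum _ x
  have hmono : ∀ j (x : Fin (k-1) ⊕ Fin m → ℝ),
      x ⬝ᵥ (w j • S j) *ᵥ x ≤ x ⬝ᵥ N *ᵥ x := by
    intro j x
    rw [hsumquad]
    exact Finset.single_le_sum (f := fun j => x ⬝ᵥ (w j • S j) *ᵥ x)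
      (fun j _ => hquadnn j x) (Finset.mem_univ j)
  have hblk11N : N.toBlocks₁₁ = ∑ j, (w j • S j).toBlocks₁₁ := by
    ext a b
    simp [hN, Matrix.toBlocks₁₁, Matrix.sum_apply]
  have hNval : N = 1 - ∑ j, w j • vecMulVec (μ j) (μ j) := by
    rw [← hiso]
    rw [eq_sub_iff_add_eq, ← Finset.sum_add_distrib]
    refine Finset.sum_congr rfl fun j _ => ?_
    rw [smul_add]
  have hblk22N : N.toBlocks₂₂ = 1 := by
    ext a b
    simp [hNval, Matrix.toBlocks₂₂, Matrix.sub_apply, Matrix.sum_apply,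
      Matrix.one_apply, Matrix.vecMulVec_apply, hblock, Sum.inr.injEq]
  -- bound on the quadratic form of the big block-11 sum
  have hφ2 : ∀ u : Fin (k-1) → ℝ, u ⬝ᵥ N.toBlocks₁₁ *ᵥ u ≤ φ * (u ⬝ᵥ u) := by
    intro u
    rcases eq_or_ne u 0 with rfl | hu
    · simp
    · have hc : 0 < u ⬝ᵥ u := by
        rcases lt_or_eq_of_le (Finset.sum_nonneg fun i _ => mul_self_nonneg (u i)) with h | h
        · exact h
        · exact absurd ((dotProduct_self_eq_zero).mp h.symm) hu
      set c := u ⬝ᵥ u with hcdef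
      set v := (Real.sqrt c)⁻¹ • u with hv
      have hsc : Real.sqrt c ≠ 0 := by positivity
      have hvv : v ⬝ᵥ v = 1 := by
        rw [hv, smul_dotProduct, dotProduct_smul, smul_smul, smul_eq_mul,
          ← mul_inv, Real.mul_self_sqrt hc.le, ← hcdef, inv_mul_cancel₀ hc.ne']
      have hmem : v ⬝ᵥ (∑ j, (w j • S j).toBlocks₁₁) *ᵥ v ≤ φ :=
        hφ.2 ⟨v, hvv, rfl⟩
      rw [← hblk11N] at hmem
      have hscale : v ⬝ᵥ N.toBlocks₁₁ *ᵥ v = c⁻¹ * (u ⬝ᵥ N.toBlocks₁₁ *ᵥ u) := by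
        rw [hv, smul_dotProduct, Matrix.mulVec_smul, dotProduct_smul,
          smul_smul, smul_eq_mul, ← mul_inv, Real.mul_self_sqrt hc.le]
      rw [hscale] at hmem
      calc u ⬝ᵥ N.toBlocks₁₁ *ᵥ u = c * (c⁻¹ * (u ⬝ᵥ N.toBlocks₁₁ *ᵥ u)) := by
            field_simp
        _ ≤ c * φ := by
            exact mul_le_mul_of_nonneg_left hmem hc.le
        _ = φ * c := mul_comm _ _
  have hφ0 : 0 ≤ φ := by
    obtain ⟨u, hu1, hEq⟩ := hφ.1
    rw [hEq, ← hblk11N, quad_blocks₁₁]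
    calc (0:ℝ) ≤ ∑ j, (Sum.elim u 0) ⬝ᵥ (w j • S j) *ᵥ (Sum.elim u 0) :=
          Finset.sum_nonneg fun j _ => hquadnn j _
      _ = _ := (hsumquad _).symm
  intro i
  -- block 11 bound
  have hA : ‖(w i • S i).toBlocks₁₁‖ ≤ φ := by
    have hpsd : ((w i • S i).toBlocks₁₁).PosSemidef := (hPSD i).submatrix Sum.inl
    refine norm_le_of_quad hpsd hφ0 fun u => ?_
    rw [quad_blocks₁₁]
    calc (Sum.elim u 0) ⬝ᵥ (w i • S i) *ᵥ (Sum.elim u 0)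
        ≤ (Sum.elim u 0) ⬝ᵥ N *ᵥ (Sum.elim u 0) := hmono i _
      _ = u ⬝ᵥ N.toBlocks₁₁ *ᵥ u := (quad_blocks₁₁ N u).symm
      _ ≤ φ * (u ⬝ᵥ u) := hφ2 u
  have hD : ‖(w i • S i).toBlocks₂₂‖ ≤ 1 := by
    have hpsd : ((w i • S i).toBlocks₂₂).PosSemidef := (hPSD i).submatrix Sum.inr
    refine norm_le_of_quad hpsd zero_le_one fun v => ?_
    rw [quad_blocks₂₂]
    calc (Sum.elim 0 v) ⬝ᵥ (w i • S i) *ᵥ (Sum.elim 0 v)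
        ≤ (Sum.elim 0 v) ⬝ᵥ N *ᵥ (Sum.elim 0 v) := hmono i _
      _ = v ⬝ᵥ N.toBlocks₂₂ *ᵥ v := (quad_blocks₂₂ N v).symm
      _ = 1 * (v ⬝ᵥ v) := by rw [hblk22N]; simp
  refine ⟨hA, hD, ?_⟩
  have hB2 := norm_toBlocks₂₁_sq (hPSD i)
  have : ‖(w i • S i).toBlocks₂₁‖ * ‖(w i • S i).toBlocks₂₁‖ ≤ φ := by
    calc ‖(w i • S i).toBlocks₂₁‖ * ‖(w i • S i).toBlocks₂₁‖
        ≤ ‖(w i • S i).toBlocks₁₁‖ * ‖(w i • S i).toBlocks₂₂‖ := hB2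
      _ ≤ φ * 1 := mul_le_mul hA hD (norm_nonneg _) hφ0
      _ = φ := mul_one φ
  calc ‖(w i • S i).toBlocks₂₁‖
      = Real.sqrt (‖(w i • S i).toBlocks₂₁‖ * ‖(w i • S i).toBlocks₂₁‖) :=
        (Real.sqrt_mul_self (norm_nonneg _)).symm
    _ ≤ Real.sqrt φ := Real.sqrt_le_sqrt this
end

section
/- Let φ ∈ [0,1) be the overlap of an isotropic mixture with means μ₁,…,μ_k spanning a (k−1)-dimensional subspace F, and let h be a unit vector with ‖proj_F(h)‖² ≥ 1 − ε. If P₁ has orthonormal columns spanning F, then maxᵢ (hᵀμᵢ)² ≥ ‖P₁ᵀh‖²·(1−φ) ≥ (1−ε)(1−φ). In particular if (1−ε)(1−φ) > 1/2, two of the projected means hᵀμᵢ are at distance more than 1/2 apart. -/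
open scoped RealInnerProductSpace

/-- Let `φ ∈ [0,1)` be the overlap of an isotropic mixture with means spanning the
`(k−1)`-dimensional subspace `F`, and `h` a unit vector with `‖proj_F h‖² ≥ 1 − ε`.
Then `maxᵢ (hᵀμᵢ)² ≥ ‖proj_F h‖²(1−φ) ≥ (1−ε)(1−φ)`; in particular if
`(1−ε)(1−φ) > 1/2` then two projected means `hᵀμᵢ` are more than `1/2` apart. -/
theorem stmt_17 {n k : ℕ} (hk : 0 < k) (φ ε : ℝ) (hφ0 : 0 ≤ φ) (hφ1 : φ < 1)
    (w : Fin k → ℝ) (hw : ∀ i, 0 < w i) (hwsum : ∑ i, w i = 1)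
    (μ : Fin k → EuclideanSpace ℝ (Fin n))
    (hmean : ∑ i, w i • μ i = 0)
    (F : Submodule ℝ (EuclideanSpace ℝ (Fin n))) (hF : F = Submodule.span ℝ (Set.range μ))
    (hdim : Module.finrank ℝ F = k - 1)
    (hover : ∀ v : EuclideanSpace ℝ (Fin n), v ∈ F → ‖v‖ = 1 →
      1 - φ ≤ ∑ i, w i * ⟪v, μ i⟫ ^ 2)
    (h : EuclideanSpace ℝ (Fin n)) (hh : ‖h‖ = 1)
    (hproj : 1 - ε ≤ ‖(F.orthogonalProjectionOnto h : EuclideanSpace ℝ (Fin n))‖ ^ 2) :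
    (∃ i, ‖(F.orthogonalProjectionOnto h : EuclideanSpace ℝ (Fin n))‖ ^ 2 * (1 - φ)
        ≤ ⟪h, μ i⟫ ^ 2 ∧ (1 - ε) * (1 - φ) ≤ ⟪h, μ i⟫ ^ 2) ∧
    ((1 : ℝ) / 2 < (1 - ε) * (1 - φ) → ∃ i j, 1 / 2 < |⟪h, μ i⟫ - ⟪h, μ j⟫|) := by
  have hφ' : (0:ℝ) ≤ 1 - φ := by linarith
  set p : EuclideanSpace ℝ (Fin n) := (F.orthogonalProjectionOnto h : EuclideanSpace ℝ (Fin n))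
    with hp
  have hμF : ∀ i, μ i ∈ F := fun i => hF ▸ Submodule.subset_span ⟨i, rfl⟩
  -- ⟪h, μ i⟫ = ⟪p, μ i⟫
  have hkey : ∀ i, ⟪h, μ i⟫ = ⟪p, μ i⟫ := by
    intro i
    have h1 : h - p ∈ Fᗮ := F.sub_starProjection_mem_orthogonal h
    have h2 : ⟪h - p, μ i⟫ = 0 := by
      rw [real_inner_comm]; exact h1 (μ i) (hμF i)
    have := inner_sub_left (𝕜 := ℝ) h p (μ i)
    simp only [h2] at this
    linarith [this.symm]
  -- the weighted sum of ⟪h, μ i⟫ is zero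
  have hsum0 : ∑ i, w i * ⟪h, μ i⟫ = 0 := by
    have : ∑ i, w i * ⟪h, μ i⟫ = ⟪h, ∑ i, w i • μ i⟫ := by
      rw [inner_sum]
      exact Finset.sum_congr rfl fun i _ => (real_inner_smul_right h (μ i) (w i)).symm
    rw [this, hmean, inner_zero_right]
  -- main existence claim
  have main : ∃ i, ‖p‖ ^ 2 * (1 - φ) ≤ ⟪h, μ i⟫ ^ 2 := by
    by_cases hp0 : p = 0
    · refine ⟨⟨0, hk⟩, ?_⟩
      rw [hp0]
      simp
      positivity
    · set v : EuclideanSpace ℝ (Fin n) := ‖p‖⁻¹ • p with hv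
      have hpn : (0:ℝ) < ‖p‖ := norm_pos_iff.mpr hp0
      have hvF : v ∈ F := Submodule.smul_mem F _ (F.orthogonalProjectionOnto h).2
      have hvn : ‖v‖ = 1 := by
        rw [hv, norm_smul, norm_inv, norm_norm, inv_mul_cancel₀ hpn.ne']
      have hov := hover v hvF hvn
      have heq : ∀ i, ⟪v, μ i⟫ ^ 2 = ‖p‖⁻¹ ^ 2 * ⟪h, μ i⟫ ^ 2 := by
        intro i
        rw [hv, real_inner_smul_left, hkey i]
        ring
      by_contra hc
      push_neg at hc
      have hlt : ∑ i, w i * ⟪v, μ i⟫ ^ 2 < ∑ i, w i * (1 - φ) := by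
        apply Finset.sum_lt_sum_of_nonempty
        · exact Finset.univ_nonempty_iff.mpr ⟨⟨0, hk⟩⟩
        · intro i _
          rw [heq i]
          have h1 : ⟪h, μ i⟫ ^ 2 < ‖p‖ ^ 2 * (1 - φ) := hc i
          have h2 : ‖p‖⁻¹ ^ 2 * ⟪h, μ i⟫ ^ 2 < 1 - φ := by
            have := mul_lt_mul_of_pos_left h1 (by positivity : (0:ℝ) < ‖p‖⁻¹ ^ 2)
            calc ‖p‖⁻¹ ^ 2 * ⟪h, μ i⟫ ^ 2 < ‖p‖⁻¹ ^ 2 * (‖p‖ ^ 2 * (1 - φ)) := this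
              _ = 1 - φ := by field_simp
          exact mul_lt_mul_of_pos_left h2 (hw i)
      rw [← Finset.sum_mul, hwsum, one_mul] at hlt
      linarith
  obtain ⟨i₀, hi₀⟩ := main
  have hεφ : (1 - ε) * (1 - φ) ≤ ‖p‖ ^ 2 * (1 - φ) :=
    mul_le_mul_of_nonneg_right hproj hφ'
  constructor
  · exact ⟨i₀, hi₀, le_trans hεφ hi₀⟩
  · intro hhalf
    have hsq : (1:ℝ)/2 < ⟪h, μ i₀⟫ ^ 2 := lt_of_lt_of_le hhalf (le_trans hεφ hi₀)
    rcases lt_or_ge 0 ⟪h, μ i₀⟫ with hpos | hneg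
    · -- find j with ⟪h, μ j⟫ ≤ 0
      have : ∃ j, ⟪h, μ j⟫ ≤ 0 := by
        by_contra hc
        push_neg at hc
        have : 0 < ∑ i, w i * ⟪h, μ i⟫ :=
          Finset.sum_pos (fun i _ => mul_pos (hw i) (hc i))
            (Finset.univ_nonempty_iff.mpr ⟨⟨0, hk⟩⟩)
        linarith
      obtain ⟨j, hj⟩ := this
      refine ⟨i₀, j, ?_⟩
      have h1 : (1:ℝ)/2 < ⟪h, μ i₀⟫ := by nlinarith
      rw [abs_of_pos (by linarith)]
      linarith
    · have hneg' : ⟪h, μ i₀⟫ < -(1/2) := by nlinarith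
      have : ∃ j, 0 ≤ ⟪h, μ j⟫ := by
        by_contra hc
        push_neg at hc
        have : ∑ i, w i * ⟪h, μ i⟫ < 0 :=
          Finset.sum_neg (fun i _ => mul_neg_of_pos_of_neg (hw i) (hc i))
            (Finset.univ_nonempty_iff.mpr ⟨⟨0, hk⟩⟩)
        linarith
      obtain ⟨j, hj⟩ := this
      refine ⟨j, i₀, ?_⟩
      rw [abs_of_pos (by linarith)]
      linarith
end

section
/- For an isotropic mixture with intermean subspace spanned by the columns of P₁ (orthonormal), complementary orthonormal P₂, and block decomposition P₁ᵀwᵢΣᵢP₁ = Aᵢ with ‖Aᵢ‖ ≤ φ, P₂ᵀwᵢΣᵢP₂ = Dᵢ with ‖Dᵢ‖ ≤ 1, P₂ᵀwᵢΣᵢP₁ = Bᵢ with ‖Bᵢ‖ ≤ √φ: for any unit vector h with ‖P₁ᵀh‖ = 1−ε, one has hᵀwᵢΣᵢh ≤ 2(φ + 2ε). -/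
open Matrix
open scoped Matrix.Norms.L2Operator

private lemma euc_norm_eq {n : Type*} [Fintype n] (v : n → ℝ) :
    ‖(EuclideanSpace.equiv n ℝ).symm v‖ = Real.sqrt (∑ i, v i ^ 2) := by
  rw [EuclideanSpace.norm_eq]
  congr 1
  refine Finset.sum_congr rfl fun i _ => ?_
  simp [Real.norm_eq_abs, sq_abs]

private lemma quad_bound {a b : Type*} [Fintype a] [Fintype b] [DecidableEq a] [DecidableEq b]
    (M : Matrix a b ℝ) (x : a → ℝ) (y : b → ℝ) :
    x ⬝ᵥ M *ᵥ y ≤ ‖M‖ * (Real.sqrt (∑ i, x i ^ 2) * Real.sqrt (∑ j, y j ^ 2)) := by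
  have h1 : x ⬝ᵥ M *ᵥ y ≤
      Real.sqrt (∑ i, x i ^ 2) * Real.sqrt (∑ i, (M *ᵥ y) i ^ 2) := by
    simpa [dotProduct] using Real.sum_mul_le_sqrt_mul_sqrt Finset.univ x (M *ᵥ y)
  have h2 : Real.sqrt (∑ i, (M *ᵥ y) i ^ 2) ≤ ‖M‖ * Real.sqrt (∑ j, y j ^ 2) := by
    have h2' : ‖(EuclideanSpace.equiv a ℝ).symm (M *ᵥ y)‖ ≤
        ‖M‖ * ‖(EuclideanSpace.equiv b ℝ).symm y‖ :=
      M.l2_opNorm_mulVec ((EuclideanSpace.equiv b ℝ).symm y)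
    rwa [euc_norm_eq, euc_norm_eq] at h2'
  calc x ⬝ᵥ M *ᵥ y ≤ Real.sqrt (∑ i, x i ^ 2) * Real.sqrt (∑ i, (M *ᵥ y) i ^ 2) := h1
    _ ≤ Real.sqrt (∑ i, x i ^ 2) * (‖M‖ * Real.sqrt (∑ j, y j ^ 2)) :=
        mul_le_mul_of_nonneg_left h2 (Real.sqrt_nonneg _)
    _ = ‖M‖ * (Real.sqrt (∑ i, x i ^ 2) * Real.sqrt (∑ j, y j ^ 2)) := by ring

set_option maxHeartbeats 1000000 in
/-- With the block decomposition `wᵢΣᵢ = [[Aᵢ, Bᵢᵀ],[Bᵢ, Dᵢ]]` adapted to the intermean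
subspace (spanned by the first block of coordinates), where `‖Aᵢ‖ ≤ φ`, `‖Dᵢ‖ ≤ 1`,
`‖Bᵢ‖ ≤ √φ`: for any unit vector `h` whose projection to the intermean subspace has norm
`1 − ε`, one has `hᵀwᵢΣᵢh ≤ 2(φ + 2ε)`. -/
theorem stmt_18 {r m : ℕ} (φ ε : ℝ) (hφ0 : 0 ≤ φ)
    (wS : Matrix (Fin r ⊕ Fin m) (Fin r ⊕ Fin m) ℝ) (hpsd : wS.PosSemidef)
    (hA : ‖wS.toBlocks₁₁‖ ≤ φ) (hD : ‖wS.toBlocks₂₂‖ ≤ 1)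
    (hB : ‖wS.toBlocks₂₁‖ ≤ Real.sqrt φ)
    (h : (Fin r ⊕ Fin m) → ℝ) (hh : h ⬝ᵥ h = 1)
    (hproj : Real.sqrt (∑ j : Fin r, h (Sum.inl j) ^ 2) = 1 - ε) :
    h ⬝ᵥ wS *ᵥ h ≤ 2 * (φ + 2 * ε) := by
  set x : Fin r → ℝ := fun j => h (Sum.inl j) with hx
  set y : Fin m → ℝ := fun j => h (Sum.inr j) with hy
  have hhe : h = Sum.elim x y := by funext i; cases i <;> rfl
  -- norms
  set s : ℝ := Real.sqrt (∑ j, x j ^ 2) with hs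
  set u : ℝ := Real.sqrt (∑ j, y j ^ 2) with hu
  have hsx : ∑ j, x j ^ 2 = s ^ 2 := (Real.sq_sqrt (by positivity)).symm
  have hsy : ∑ j, y j ^ 2 = u ^ 2 := (Real.sq_sqrt (by positivity)).symm
  have hsum : s ^ 2 + u ^ 2 = 1 := by
    rw [← hsx, ← hsy]
    have : h ⬝ᵥ h = ∑ j, x j ^ 2 + ∑ j, y j ^ 2 := by
      rw [hhe, sumElim_dotProduct_sumElim]
      simp [dotProduct, sq]
    linarith [hh, this.symm]
  have hse : s = 1 - ε := hproj
  have hs0 : 0 ≤ s := Real.sqrt_nonneg _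
  have hu0 : 0 ≤ u := Real.sqrt_nonneg _
  have hu2 : u ^ 2 = 1 - (1 - ε) ^ 2 := by rw [← hse]; linarith
  have hε0 : 0 ≤ ε := by nlinarith
  -- transpose block
  have hsym : wS.toBlocks₁₂ = wS.toBlocks₂₁ᵀ := by
    have := hpsd.1
    have h2 : wSᵀ = wS := this
    calc wS.toBlocks₁₂ = (wSᵀ).toBlocks₂₁ᵀ := by
          ext i j; simp [toBlocks₁₂, toBlocks₂₁]
      _ = wS.toBlocks₂₁ᵀ := by rw [h2]
  have hB12 : ‖wS.toBlocks₁₂‖ ≤ Real.sqrt φ := by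
    rw [hsym]
    have : (wS.toBlocks₂₁)ᵀ = (wS.toBlocks₂₁)ᴴ := by
      ext i j; simp
    rw [this, Matrix.l2_opNorm_conjTranspose]
    exact hB
  -- decompose the quadratic form
  have hdecomp : h ⬝ᵥ wS *ᵥ h =
      x ⬝ᵥ wS.toBlocks₁₁ *ᵥ x + x ⬝ᵥ wS.toBlocks₁₂ *ᵥ y
      + (y ⬝ᵥ wS.toBlocks₂₁ *ᵥ x + y ⬝ᵥ wS.toBlocks₂₂ *ᵥ y) := by
    conv_lhs => rw [hhe, ← wS.fromBlocks_toBlocks, fromBlocks_mulVec,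
      sumElim_dotProduct_sumElim]
    simp [dotProduct_add]
  have e1 : x ⬝ᵥ wS.toBlocks₁₁ *ᵥ x ≤ φ * (s * s) := by
    calc x ⬝ᵥ wS.toBlocks₁₁ *ᵥ x ≤ ‖wS.toBlocks₁₁‖ * (s * s) := quad_bound _ _ _
      _ ≤ φ * (s * s) := mul_le_mul_of_nonneg_right hA (by positivity)
  have e2 : x ⬝ᵥ wS.toBlocks₁₂ *ᵥ y ≤ Real.sqrt φ * (s * u) := by
    calc x ⬝ᵥ wS.toBlocks₁₂ *ᵥ y ≤ ‖wS.toBlocks₁₂‖ * (s * u) := quad_bound _ _ _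
      _ ≤ Real.sqrt φ * (s * u) := mul_le_mul_of_nonneg_right hB12 (by positivity)
  have e3 : y ⬝ᵥ wS.toBlocks₂₁ *ᵥ x ≤ Real.sqrt φ * (u * s) := by
    calc y ⬝ᵥ wS.toBlocks₂₁ *ᵥ x ≤ ‖wS.toBlocks₂₁‖ * (u * s) := quad_bound _ _ _
      _ ≤ Real.sqrt φ * (u * s) := mul_le_mul_of_nonneg_right hB (by positivity)
  have e4 : y ⬝ᵥ wS.toBlocks₂₂ *ᵥ y ≤ 1 * (u * u) := by
    calc y ⬝ᵥ wS.toBlocks₂₂ *ᵥ y ≤ ‖wS.toBlocks₂₂‖ * (u * u) := quad_bound _ _ _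
      _ ≤ 1 * (u * u) := mul_le_mul_of_nonneg_right hD (by positivity)
  have hsq : Real.sqrt φ ^ 2 = φ := Real.sq_sqrt hφ0
  have hs1 : s ≤ 1 := by nlinarith
  have amgm : 2 * (Real.sqrt φ * (s * u)) ≤ φ * s ^ 2 + u ^ 2 := by
    nlinarith [sq_nonneg (Real.sqrt φ * s - u)]
  rw [hdecomp]
  nlinarith [Real.sqrt_nonneg φ]
end
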